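/- The matrix S·R·S·R²·S belongs to U₁ but does not belong to V₁; in particular U₁ ≠ V₁. -/

import Mathlib

open Matrix

/-- `SL(2,ℤ)`, the group of 2×2 integer matrices of determinant 1. -/
abbrev SL2Z := Matrix.SpecialLinearGroup (Fin 2) ℤ

/-- The matrix `S = [[0,-1],[1,0]]` in `SL(2,ℤ)`. -/
def Smat : SL2Z := ⟨!![0, -1; 1, 0], by norm_num [Matrix.det_fin_two_of]⟩

/-- The matrix `R = ST = [[0,-1],[1,1]]` in `SL(2,ℤ)`. -/
def Rmat : SL2Z := ⟨!![0, -1; 1, 1], by norm_num [Matrix.det_fin_two_of]⟩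

/-- The subgroup `U₁` of `SL(2,ℤ)`. -/
def U1 : Subgroup SL2Z :=
  Subgroup.closure
    { (⟨!![1, 6; 0, 1], by norm_num [Matrix.det_fin_two_of]⟩ : SL2Z),
      ⟨!![1, -2; 1, -1], by norm_num [Matrix.det_fin_two_of]⟩,
      ⟨!![0, -1; 1, 1], by norm_num [Matrix.det_fin_two_of]⟩ }

/-- The subgroup `V₁` of `SL(2,ℤ)`. -/
def V1 : Subgroup SL2Z :=
  Subgroup.closure
    { (⟨!![1, 6; 0, 1], by norm_num [Matrix.det_fin_two_of]⟩ : SL2Z),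
      ⟨!![4, -17; 1, -4], by norm_num [Matrix.det_fin_two_of]⟩,
      ⟨!![0, -1; 1, 1], by norm_num [Matrix.det_fin_two_of]⟩ }

noncomputable section

/-- The type of irrational real numbers. -/
def Irr : Type := {z : ℝ // Irrational z}

namespace Irr

lemma denom_ne (g : SL2Z) (z : Irr) : ((g.1 1 0 : ℝ) * z.1 + (g.1 1 1 : ℝ)) ≠ 0 := by
  have hd : g.1.det = 1 := g.2
  rw [Matrix.det_fin_two] at hd
  by_cases hc : g.1 1 0 = 0
  · have hdd : g.1 1 1 ≠ 0 := by
      intro h; rw [hc, h] at hd; simp at hd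
    simp only [hc, Int.cast_zero, zero_mul, zero_add]
    exact_mod_cast hdd
  · intro h
    have hc' : (g.1 1 0 : ℝ) ≠ 0 := by exact_mod_cast hc
    apply z.2
    refine ⟨(-(g.1 1 1 : ℚ)) / (g.1 1 0 : ℚ), ?_⟩
    push_cast
    field_simp
    linarith

lemma image_irr (g : SL2Z) (z : Irr) :
    Irrational ((g.1 0 0 * z.1 + g.1 0 1) / (g.1 1 0 * z.1 + g.1 1 1)) := by
  rintro ⟨q, hq⟩
  have hden := denom_ne g z
  have hdet : (g.1 0 0 : ℝ) * g.1 1 1 - g.1 0 1 * g.1 1 0 = 1 := by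
    have h2 := g.2
    rw [Matrix.det_fin_two] at h2
    exact_mod_cast h2
  rw [eq_div_iff hden] at hq
  by_cases h2 : (g.1 0 0 : ℝ) - q * g.1 1 0 = 0
  · have ha : (g.1 0 0 : ℝ) = q * g.1 1 0 := by linarith
    have hb : (g.1 0 1 : ℝ) = q * g.1 1 1 := by linear_combination -hq - z.1 * h2
    rw [ha, hb] at hdet
    ring_nf at hdet
    norm_num at hdet
  · apply z.2
    have h2' : ((g.1 0 0 : ℚ) - q * (g.1 1 0 : ℚ) : ℚ) ≠ 0 := by
      intro h0
      apply h2
      have : (((g.1 0 0 : ℚ) - q * (g.1 1 0 : ℚ) : ℚ) : ℝ) = 0 := by rw [h0]; norm_num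
      push_cast at this
      linarith
    refine ⟨((q : ℚ) * (g.1 1 1 : ℚ) - (g.1 0 1 : ℚ)) / ((g.1 0 0 : ℚ) - q * (g.1 1 0 : ℚ)), ?_⟩
    push_cast
    rw [div_eq_iff (by push_cast at h2 ⊢; exact h2)]
    linear_combination hq

instance : SMul SL2Z Irr :=
  ⟨fun g z => ⟨(g.1 0 0 * z.1 + g.1 0 1) / (g.1 1 0 * z.1 + g.1 1 1), image_irr g z⟩⟩

lemma smul_coe (g : SL2Z) (z : Irr) :
    (g • z).1 = ((g.1 0 0 : ℝ) * z.1 + g.1 0 1) / ((g.1 1 0 : ℝ) * z.1 + g.1 1 1) := rfl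

instance : MulAction SL2Z Irr where
  one_smul z := by
    apply Subtype.ext
    rw [smul_coe]
    simp [Matrix.SpecialLinearGroup.coe_one, Matrix.one_apply]
  mul_smul g h z := by
    apply Subtype.ext
    have Dh := denom_ne h z
    have Dg := denom_ne g (h • z)
    have Dgh := denom_ne (g * h) z
    rw [smul_coe] at Dg
    rw [smul_coe, smul_coe, smul_coe]
    have hcoe : (g * h).1 = g.1 * h.1 := rfl
    rw [hcoe] at Dgh ⊢
    simp only [Matrix.mul_apply, Fin.sum_univ_two] at Dgh ⊢
    have Dg' : (g.1 1 0 : ℝ) * ((h.1 0 0 : ℝ) * z.1 + h.1 0 1) +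
        (g.1 1 1 : ℝ) * ((h.1 1 0 : ℝ) * z.1 + h.1 1 1) ≠ 0 := by
      intro h0
      apply Dg
      have expand : (g.1 1 0 : ℝ) * (((h.1 0 0 : ℝ) * z.1 + h.1 0 1) / ((h.1 1 0 : ℝ) * z.1 + h.1 1 1)) + (g.1 1 1 : ℝ)
          = ((g.1 1 0 : ℝ) * ((h.1 0 0 : ℝ) * z.1 + h.1 0 1) +
            (g.1 1 1 : ℝ) * ((h.1 1 0 : ℝ) * z.1 + h.1 1 1)) / ((h.1 1 0 : ℝ) * z.1 + h.1 1 1) := by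
        rw [mul_div_assoc', div_add' _ _ _ Dh]
      rw [expand, h0, zero_div]
    push_cast at Dgh ⊢
    rw [mul_div_assoc', mul_div_assoc', div_add' _ _ _ Dh, div_add' _ _ _ Dh,
      div_div_div_cancel_right₀ Dh]
    congr 1 <;> ring

end Irr
end

/-- Helper to prove equalities in `SL2Z`. -/
lemma SL2Z.ext' {A B : SL2Z} (h : A.1 = B.1) : A = B := Subtype.ext h

def Tmat : SL2Z := ⟨!![1, 1; 0, 1], by norm_num [Matrix.det_fin_two_of]⟩
def Tinv : SL2Z := ⟨!![1, -1; 0, 1], by norm_num [Matrix.det_fin_two_of]⟩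
def genA : SL2Z := ⟨!![1, 6; 0, 1], by norm_num [Matrix.det_fin_two_of]⟩
def genB : SL2Z := ⟨!![4, -17; 1, -4], by norm_num [Matrix.det_fin_two_of]⟩
def genM : SL2Z := ⟨!![1, -2; 1, -1], by norm_num [Matrix.det_fin_two_of]⟩

lemma Smat_inv : Smat⁻¹ = ⟨!![0, 1; -1, 0], by norm_num [Matrix.det_fin_two_of]⟩ := by
  apply inv_eq_of_mul_eq_one_right
  apply SL2Z.ext'
  show Smat.1 * _ = _
  norm_num [Smat, Matrix.mul_fin_two]
  exact Matrix.one_fin_two.symm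

lemma Tmat_eq : Smat⁻¹ * Rmat = Tmat := by
  rw [Smat_inv]
  apply SL2Z.ext'
  show _ * Rmat.1 = _
  norm_num [Rmat, Tmat, Matrix.mul_fin_two]

lemma Tinv_eq : Tmat⁻¹ = Tinv := by
  apply inv_eq_of_mul_eq_one_right
  apply SL2Z.ext'
  show Tmat.1 * Tinv.1 = _
  norm_num [Tmat, Tinv, Matrix.mul_fin_two]
  exact Matrix.one_fin_two.symm

lemma genA_eq :
    (Smat⁻¹ * Rmat) * (Smat⁻¹ * Rmat) * (Smat⁻¹ * Rmat) * (Smat⁻¹ * Rmat) * (Smat⁻¹ * Rmat) *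
      (Smat⁻¹ * Rmat) = genA := by
  rw [Tmat_eq]
  apply SL2Z.ext'
  show Tmat.1 * Tmat.1 * Tmat.1 * Tmat.1 * Tmat.1 * Tmat.1 = _
  norm_num [Tmat, genA, Matrix.mul_fin_two]

lemma genB_eq :
    (Smat⁻¹ * Rmat) * (Smat⁻¹ * Rmat) * (Smat⁻¹ * Rmat) * (Smat⁻¹ * Rmat) * Smat *
      ((Smat⁻¹ * Rmat)⁻¹ * ((Smat⁻¹ * Rmat)⁻¹ * ((Smat⁻¹ * Rmat)⁻¹ * (Smat⁻¹ * Rmat)⁻¹))) =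
      genB := by
  rw [Tmat_eq, Tinv_eq]
  apply SL2Z.ext'
  show Tmat.1 * Tmat.1 * Tmat.1 * Tmat.1 * Smat.1 * (Tinv.1 * (Tinv.1 * (Tinv.1 * Tinv.1))) = _
  norm_num [Tmat, Tinv, Smat, genB, Matrix.mul_fin_two]

lemma genM_eq : Smat * Rmat * Smat * Rmat ^ 2 * Smat = genM := by
  apply SL2Z.ext'
  rw [pow_two]
  show Smat.1 * Rmat.1 * Smat.1 * (Rmat.1 * Rmat.1) * Smat.1 = _
  norm_num [Smat, Rmat, genM, Matrix.mul_fin_two]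

lemma Smat_sq : Smat * Smat = ⟨!![-1, 0; 0, -1], by norm_num [Matrix.det_fin_two_of]⟩ := by
  apply SL2Z.ext'
  show Smat.1 * Smat.1 = _
  norm_num [Smat, Matrix.mul_fin_two]

lemma Rmat_sq : Rmat * Rmat = ⟨!![-1, -1; 1, 0], by norm_num [Matrix.det_fin_two_of]⟩ := by
  apply SL2Z.ext'
  show Rmat.1 * Rmat.1 = _
  norm_num [Rmat, Matrix.mul_fin_two]

lemma Rmat_cube : Rmat * Rmat * Rmat = ⟨!![-1, 0; 0, -1], by norm_num [Matrix.det_fin_two_of]⟩ := by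
  rw [Rmat_sq]
  apply SL2Z.ext'
  show _ * Rmat.1 = _
  norm_num [Rmat, Matrix.mul_fin_two]

/-! ### Homomorphisms from `Multiplicative (ZMod n)` -/

lemma pow_mod_eq {G : Type*} [Monoid G] {g : G} {n : ℕ} (h : g ^ n = 1) (m : ℕ) :
    g ^ (m % n) = g ^ m := by
  conv_rhs => rw [← Nat.div_add_mod m n]
  rw [pow_add, pow_mul, h, one_pow, one_mul]

def zmodHom {G : Type*} [Group G] {n : ℕ} [NeZero n] (g : G) (h : g ^ n = 1) :
    Multiplicative (ZMod n) →* G where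
  toFun x := g ^ (x.toAdd.val)
  map_one' := by
    show g ^ (Multiplicative.toAdd (1 : Multiplicative (ZMod n))).val = 1
    rw [toAdd_one, ZMod.val_zero, pow_zero]
  map_mul' x y := by
    show g ^ (Multiplicative.toAdd (x * y)).val = _
    rw [toAdd_mul, ZMod.val_add, pow_mod_eq h, pow_add]

lemma zmodHom_apply {G : Type*} [Group G] {n : ℕ} [NeZero n] (g : G) (h : g ^ n = 1)
    (x : ZMod n) : zmodHom g h (Multiplicative.ofAdd x) = g ^ x.val := rfl

/-! ### The permutations of `Fin 7` -/

def sperm : Equiv.Perm (Fin 7) :=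
  ⟨![1, 0, 3, 2, 5, 4, 6], ![1, 0, 3, 2, 5, 4, 6], by decide, by decide⟩

def rperm : Equiv.Perm (Fin 7) :=
  ⟨![0, 6, 1, 5, 3, 4, 2], ![0, 2, 6, 4, 5, 3, 1], by decide, by decide⟩

lemma sperm_sq : sperm ^ 2 = 1 := by decide
lemma rperm_cube : rperm ^ 3 = 1 := by decide

/-! ### The free product `C2 * C3` -/

def Hfam : Bool → Type
  | false => Multiplicative (ZMod 2)
  | true => Multiplicative (ZMod 3)

instance (b : Bool) : CommGroup (Hfam b) := by
  cases b
  · exact (inferInstance : CommGroup (Multiplicative (ZMod 2)))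
  · exact (inferInstance : CommGroup (Multiplicative (ZMod 3)))

abbrev CC := Monoid.CoprodI Hfam

/-- The generator of the `C2` factor. -/
def cs : CC := Monoid.CoprodI.of (i := false) (Multiplicative.ofAdd (1 : ZMod 2))

/-- The generator of the `C3` factor. -/
def cr : CC := Monoid.CoprodI.of (i := true) (Multiplicative.ofAdd (1 : ZMod 3))

/-- The Möbius action homomorphism. -/
noncomputable def nu : SL2Z →* Equiv.Perm Irr := MulAction.toPermHom SL2Z Irr

lemma negI_entries_smul (g : SL2Z) (hg : g.1 = !![-1, 0; 0, -1]) (z : Irr) : g • z = z := by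
  apply Subtype.ext
  rw [Irr.smul_coe, hg]
  show ((-1 : ℤ) * z.1 + ((0:ℤ) : ℝ)) / (((0:ℤ) : ℝ) * z.1 + ((-1 : ℤ) : ℝ)) = z.1
  push_cast
  rw [zero_mul, add_zero, zero_add, mul_comm, mul_div_assoc]
  norm_num

lemma nu_negI (g : SL2Z) (hg : g.1 = !![-1, 0; 0, -1]) : nu g = 1 := by
  apply Equiv.ext
  intro z
  have h1 : (nu g) z = g • z := rfl
  have h2 : (1 : Equiv.Perm Irr) z = z := rfl
  rw [h1, h2, negI_entries_smul g hg]

lemma nu_S_sq : nu Smat ^ 2 = 1 := by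
  rw [← map_pow, pow_two]
  apply nu_negI
  rw [Smat_sq]

lemma nu_R_cube : nu Rmat ^ 3 = 1 := by
  rw [← map_pow, show (3:ℕ) = 2 + 1 from rfl, pow_succ, pow_two]
  apply nu_negI
  rw [Rmat_cube]

/-- The family of maps into `Perm Irr`. -/
noncomputable def fIrr : ∀ b, Hfam b →* Equiv.Perm Irr := fun b =>
  match b with
  | false => zmodHom (nu Smat) nu_S_sq
  | true => zmodHom (nu Rmat) nu_R_cube

/-- The family of maps into `Perm (Fin 7)`. -/
def fFin : ∀ b, Hfam b →* Equiv.Perm (Fin 7) := fun b =>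
  match b with
  | false => zmodHom sperm sperm_sq
  | true => zmodHom rperm rperm_cube

noncomputable def lam1 : CC →* Equiv.Perm Irr := Monoid.CoprodI.lift fIrr
def lam2 : CC →* Equiv.Perm (Fin 7) := Monoid.CoprodI.lift fFin

lemma lam1_cs : lam1 cs = nu Smat := by
  rw [lam1, cs]
  erw [Monoid.CoprodI.lift_of]

lemma lam1_cr : lam1 cr = nu Rmat := by
  rw [lam1, cr]
  erw [Monoid.CoprodI.lift_of]

lemma lam2_cs : lam2 cs = sperm := by
  rw [lam2, cs]
  erw [Monoid.CoprodI.lift_of]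
  show zmodHom sperm sperm_sq (Multiplicative.ofAdd (1 : ZMod 2)) = _
  rw [zmodHom_apply]
  norm_num [ZMod.val_one]

lemma lam2_cr : lam2 cr = rperm := by
  rw [lam2, cr]
  erw [Monoid.CoprodI.lift_of]
  show zmodHom rperm rperm_cube (Multiplicative.ofAdd (1 : ZMod 3)) = _
  rw [zmodHom_apply]
  norm_num [ZMod.val_one]

open Pointwise
lemma nu_apply (g : SL2Z) (z : Irr) : (nu g) z = g • z := rfl

lemma Smat_smul_coe (z : Irr) : (Smat • z).1 = -1 / z.1 := by
  rw [Irr.smul_coe]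
  norm_num [Smat]

lemma Rmat_smul_coe (z : Irr) : (Rmat • z).1 = -1 / (z.1 + 1) := by
  rw [Irr.smul_coe]
  norm_num [Rmat]

lemma RR_smul_coe (z : Irr) : ((Rmat * Rmat) • z).1 = (-z.1 - 1) / z.1 := by
  rw [Irr.smul_coe]
  have h := congrArg Subtype.val Rmat_sq
  rw [h]
  norm_num
  ring_nf

/-- The ping-pong sets: positive irrationals for the `C2` factor (index `false`),
negative irrationals for the `C3` factor (index `true`). -/
def XPP : Bool → Set Irr
  | false => {z : Irr | 0 < z.1}
  | true => {z : Irr | z.1 < 0}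

lemma hXnonempty : ∀ b, (XPP b).Nonempty := by
  intro b
  cases b
  · exact ⟨⟨Real.sqrt 2, irrational_sqrt_two⟩, by
      show (0:ℝ) < Real.sqrt 2
      positivity⟩
  · refine ⟨⟨-Real.sqrt 2, irrational_sqrt_two.neg⟩, ?_⟩
    show -Real.sqrt 2 < 0
    have : (0:ℝ) < Real.sqrt 2 := by positivity
    linarith

lemma hXdisj : Pairwise (Function.onFun Disjoint XPP) := by
  intro i j hij
  have : ∀ (z : Irr), z ∈ XPP false → z ∈ XPP true → False := by
    intro z h1 h2
    have p1 : 0 < z.1 := h1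
    have p2 : z.1 < 0 := h2
    linarith
  cases i <;> cases j <;> simp at hij <;>
    exact Set.disjoint_left.mpr (fun z hz hz' => by
      first
        | exact this z hz hz'
        | exact this z hz' hz)

lemma hpp : Pairwise fun i j => ∀ h : Hfam i, h ≠ 1 → fIrr i h • XPP j ⊆ XPP i := by
  intro i j hij
  cases i
  · -- i = false : the C2 factor, maps negatives to positives
    cases j
    · simp at hij
    intro h hne
    have hcase : ∀ y : Multiplicative (ZMod 2), y = 1 ∨ y = Multiplicative.ofAdd 1 := by decide
    have hh : h = Multiplicative.ofAdd (1 : ZMod 2) := by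
      rcases hcase h with h1 | h1
      · exact absurd h1 hne
      · exact h1
    have hf : fIrr false h = nu Smat := by
      rw [hh]
      show zmodHom (nu Smat) nu_S_sq (Multiplicative.ofAdd (1 : ZMod 2)) = _
      rw [zmodHom_apply, ZMod.val_one, pow_one]
    rw [hf]
    intro w hw
    rw [Set.mem_smul_set] at hw
    obtain ⟨y, hy, rfl⟩ := hw
    have hy' : y.1 < 0 := hy
    show 0 < ((nu Smat) • y).1
    rw [Equiv.Perm.smul_def, nu_apply, Smat_smul_coe]
    exact div_pos_iff.mpr (Or.inr ⟨by norm_num, hy'⟩)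
  · -- i = true : the C3 factor, maps positives to negatives
    cases j
    swap
    · simp at hij
    intro h hne
    have hcase : ∀ y : Multiplicative (ZMod 3),
        y = 1 ∨ y = Multiplicative.ofAdd 1 ∨ y = Multiplicative.ofAdd 2 := by decide
    intro w hw
    rw [Set.mem_smul_set] at hw
    obtain ⟨y, hy, rfl⟩ := hw
    have hy' : 0 < y.1 := hy
    rcases hcase h with h1 | h1 | h1
    · exact absurd h1 hne
    · have hf : fIrr true h = nu Rmat := by
        rw [h1]
        show zmodHom (nu Rmat) nu_R_cube (Multiplicative.ofAdd (1 : ZMod 3)) = _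
        rw [zmodHom_apply, ZMod.val_one, pow_one]
      rw [hf]
      show ((nu Rmat) • y).1 < 0
      rw [Equiv.Perm.smul_def, nu_apply, Rmat_smul_coe]
      apply div_neg_of_neg_of_pos
      · norm_num
      · linarith
    · have hf : fIrr true h = nu (Rmat * Rmat) := by
        rw [h1]
        show zmodHom (nu Rmat) nu_R_cube (Multiplicative.ofAdd (2 : ZMod 3)) = _
        rw [zmodHom_apply]
        rw [show ((2 : ZMod 3)).val = 2 from rfl, ← map_pow, pow_two]
      rw [hf]
      show ((nu (Rmat * Rmat)) • y).1 < 0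
      rw [Equiv.Perm.smul_def, nu_apply, RR_smul_coe]
      apply div_neg_of_neg_of_pos
      · linarith
      · exact hy'

lemma hcard : 3 ≤ Cardinal.mk Bool ∨ ∃ i, 3 ≤ Cardinal.mk (Hfam i) := by
  right
  refine ⟨true, ?_⟩
  have he : Hfam true = Multiplicative (ZMod 3) := rfl
  rw [he]
  rw [Cardinal.mk_fintype]
  norm_num

lemma lam1_injective : Function.Injective lam1 :=
  Monoid.CoprodI.lift_injective_of_ping_pong fIrr hcard XPP hXnonempty hXdisj hpp

/-! ### Words in the free product for the generators -/

noncomputable def xA : CC :=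
  (cs⁻¹ * cr) * (cs⁻¹ * cr) * (cs⁻¹ * cr) * (cs⁻¹ * cr) * (cs⁻¹ * cr) * (cs⁻¹ * cr)

noncomputable def xB : CC :=
  (cs⁻¹ * cr) * (cs⁻¹ * cr) * (cs⁻¹ * cr) * (cs⁻¹ * cr) * cs *
    ((cs⁻¹ * cr)⁻¹ * ((cs⁻¹ * cr)⁻¹ * ((cs⁻¹ * cr)⁻¹ * (cs⁻¹ * cr)⁻¹)))

noncomputable def xM : CC := cs * cr * cs * (cr * cr) * cs

lemma lam1_xA : lam1 xA = nu genA := by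
  rw [← genA_eq, xA]
  simp only [_root_.map_mul, _root_.map_inv, lam1_cs, lam1_cr]

lemma lam1_xB : lam1 xB = nu genB := by
  rw [← genB_eq, xB]
  simp only [_root_.map_mul, _root_.map_inv, lam1_cs, lam1_cr]

lemma lam1_xM : lam1 xM = nu (Smat * Rmat * Smat * Rmat ^ 2 * Smat) := by
  rw [pow_two, xM]
  simp only [_root_.map_mul, lam1_cs, lam1_cr]

lemma lam2_xA : lam2 xA 0 = 0 := by
  rw [xA]
  simp only [_root_.map_mul, _root_.map_inv, lam2_cs, lam2_cr]
  decide

lemma lam2_xB : lam2 xB 0 = 0 := by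
  rw [xB]
  simp only [_root_.map_mul, _root_.map_inv, lam2_cs, lam2_cr]
  decide

lemma lam2_xM : lam2 xM 0 = 4 := by
  rw [xM]
  simp only [_root_.map_mul, lam2_cs, lam2_cr]
  decide


lemma V1_transfer : ∀ g ∈ V1, ∃ x : CC, lam1 x = nu g ∧ (lam2 x) 0 = 0 := by
  intro g hg
  induction hg using Subgroup.closure_induction with
  | mem x hx =>
    rcases hx with rfl | rfl | rfl
    · exact ⟨xA, lam1_xA, lam2_xA⟩
    · exact ⟨xB, lam1_xB, lam2_xB⟩
    · exact ⟨cr, lam1_cr, by rw [lam2_cr]; decide⟩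
  | one => exact ⟨1, by simp, by simp⟩
  | mul x y hx hy ihx ihy =>
    obtain ⟨u, hu1, hu2⟩ := ihx
    obtain ⟨v, hv1, hv2⟩ := ihy
    refine ⟨u * v, by rw [_root_.map_mul, _root_.map_mul, hu1, hv1], ?_⟩
    rw [_root_.map_mul, Equiv.Perm.mul_apply, hv2, hu2]
  | inv x hx ihx =>
    obtain ⟨u, hu1, hu2⟩ := ihx
    refine ⟨u⁻¹, by rw [_root_.map_inv, _root_.map_inv, hu1], ?_⟩
    have : lam2 u⁻¹ (lam2 u 0) = 0 := by
      rw [← Equiv.Perm.mul_apply, ← _root_.map_mul, inv_mul_cancel, _root_.map_one, Equiv.Perm.one_apply]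
    rwa [hu2] at this


/-- `S·R·S·R²·S` belongs to `U₁` but not to `V₁`; in particular `U₁ ≠ V₁`. -/
theorem SRSRRS_separates_U1_V1 :
    Smat * Rmat * Smat * Rmat ^ 2 * Smat ∈ U1 ∧
      Smat * Rmat * Smat * Rmat ^ 2 * Smat ∉ V1 ∧ U1 ≠ V1 := by
  have hmem : Smat * Rmat * Smat * Rmat ^ 2 * Smat ∈ U1 := by
    rw [genM_eq]
    exact Subgroup.subset_closure (Or.inr (Or.inl rfl))
  have hnot : Smat * Rmat * Smat * Rmat ^ 2 * Smat ∉ V1 := by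
    intro hM
    obtain ⟨x, hx1, hx2⟩ := V1_transfer _ hM
    have hx : x = xM := lam1_injective (by rw [hx1, lam1_xM])
    rw [hx, lam2_xM] at hx2
    exact absurd hx2 (by decide)
  exact ⟨hmem, hnot, fun h => hnot (h ▸ hmem)⟩
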